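/- Independence of the relative oscillation count from the chosen solutions: if τ_j u_j = 0 and τ_j v_j = 0 for j = 0, 1 (nontrivial solutions), then the lower counts satisfy |#̲(u₀,u₁) - #̲(v₀,v₁)| ≤ 4, and likewise for the upper counts #̄. -/

import Mathlib

open Set Real Filter

/-- The weighted sign flip count over `(c,d)` in Prüfer angle variables. -/
noncomputable def relOscCount (θ₀ θ₁ : ℝ → ℝ) (c d : ℝ) : ℝ :=
  (⌈(θ₁ d - θ₀ d) / π⌉ : ℝ) - (⌊(θ₁ c - θ₀ c) / π⌋ : ℝ) - 1

/-- The filter describing `c ↓ a`, `d ↑ b`. -/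
def exhaustFilter (a b : ℝ) : Filter (ℝ × ℝ) := (nhdsWithin a (Ioi a)) ×ˢ (nhdsWithin b (Iio b))


lemma mySSup_close {S T : Set ℝ} {C : ℝ} (hC : 0 ≤ C)
    (h1 : ∀ a ∈ S, a - C ∈ T) (h2 : ∀ a ∈ T, a - C ∈ S) :
    |sSup S - sSup T| ≤ C := by
  rcases S.eq_empty_or_nonempty with hS | hS
  · have hT : T = ∅ := by
      rcases T.eq_empty_or_nonempty with h | ⟨a, ha⟩
      · exact h
      · exact absurd (h2 a ha) (by simp [hS])
    simp [hS, hT, Real.sSup_empty, hC]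
  · have hT : T.Nonempty := ⟨_, h1 _ hS.choose_spec⟩
    by_cases hbT : BddAbove T
    · have hbS : BddAbove S := ⟨sSup T + C, fun a ha => by
        have := le_csSup hbT (h1 a ha); linarith⟩
      rw [abs_le]
      constructor
      · have : sSup T ≤ sSup S + C := csSup_le hT fun a ha => by
          have := le_csSup hbS (h2 a ha); linarith
        linarith
      · have : sSup S ≤ sSup T + C := csSup_le hS fun a ha => by
          have := le_csSup hbT (h1 a ha); linarith
        linarith
    · have hbS : ¬ BddAbove S := by
        rintro ⟨M, hM⟩
        exact hbT ⟨M + C, fun a ha => by have := hM (h2 a ha); linarith⟩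
      rw [Real.sSup_of_not_bddAbove hbT, Real.sSup_of_not_bddAbove hbS]
      simpa using hC

lemma mySInf_close {S T : Set ℝ} {C : ℝ} (hC : 0 ≤ C)
    (h1 : ∀ a ∈ S, a + C ∈ T) (h2 : ∀ a ∈ T, a + C ∈ S) :
    |sInf S - sInf T| ≤ C := by
  rw [Real.sInf_def, Real.sInf_def, neg_sub_neg, abs_sub_comm]
  refine mySSup_close hC ?_ ?_
  · intro a ha
    have : -(a - C) ∈ T := by
      have : -a ∈ S := Set.mem_neg.1 ha
      simpa [neg_sub, sub_eq_add_neg, add_comm] using h1 _ this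
    simpa [Set.mem_neg] using this
  · intro a ha
    have : -(a - C) ∈ S := by
      have : -a ∈ T := Set.mem_neg.1 ha
      simpa [neg_sub, sub_eq_add_neg, add_comm] using h2 _ this
    simpa [Set.mem_neg] using this

lemma myLiminf_close {α : Type*} {F : Filter α} {f g : α → ℝ} {C : ℝ} (hC : 0 ≤ C)
    (h : ∀ᶠ x in F, |f x - g x| ≤ C) :
    |Filter.liminf f F - Filter.liminf g F| ≤ C := by
  rw [Filter.liminf_eq, Filter.liminf_eq]
  refine mySSup_close hC ?_ ?_
  · intro r hr
    simp only [Set.mem_setOf_eq] at hr ⊢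
    filter_upwards [h, hr] with x hx hrx
    have := abs_le.1 hx
    linarith [this.1, this.2]
  · intro r hr
    simp only [Set.mem_setOf_eq] at hr ⊢
    filter_upwards [h, hr] with x hx hrx
    have := abs_le.1 hx
    linarith [this.1, this.2]

lemma myLimsup_close {α : Type*} {F : Filter α} {f g : α → ℝ} {C : ℝ} (hC : 0 ≤ C)
    (h : ∀ᶠ x in F, |f x - g x| ≤ C) :
    |Filter.limsup f F - Filter.limsup g F| ≤ C := by
  rw [Filter.limsup_eq, Filter.limsup_eq]
  refine mySInf_close hC ?_ ?_
  · intro r hr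
    simp only [Set.mem_setOf_eq] at hr ⊢
    filter_upwards [h, hr] with x hx hrx
    have := abs_le.1 hx
    linarith [this.1, this.2]
  · intro r hr
    simp only [Set.mem_setOf_eq] at hr ⊢
    filter_upwards [h, hr] with x hx hrx
    have := abs_le.1 hx
    linarith [this.1, this.2]


lemma angle_confined (a b : ℝ) (hab : a < b) (p q : ℝ → ℝ)
    (u u' v v' ρu θu ρv θv : ℝ → ℝ)
    (hu : ∀ x ∈ Ioo a b, HasDerivAt u (u' x) x ∧
      HasDerivAt (fun y => p y * u' y) (q x * u x) x)
    (hv : ∀ x ∈ Ioo a b, HasDerivAt v (v' x) x ∧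
      HasDerivAt (fun y => p y * v' y) (q x * v x) x)
    (hθu : ContinuousOn θu (Ioo a b)) (hθv : ContinuousOn θv (Ioo a b))
    (hpru : ∀ x ∈ Ioo a b, 0 < ρu x ∧ u x = ρu x * sin (θu x) ∧ p x * u' x = ρu x * cos (θu x))
    (hprv : ∀ x ∈ Ioo a b, 0 < ρv x ∧ v x = ρv x * sin (θv x) ∧ p x * v' x = ρv x * cos (θv x)) :
    ∃ k : ℤ, ∀ x ∈ Ioo a b, θu x - θv x ∈ Icc ((k : ℝ) * π) (((k : ℝ) + 1) * π) := by
  set W : ℝ → ℝ := fun x => u x * (p x * v' x) - v x * (p x * u' x) with hWdef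
  have hW' : ∀ x ∈ Ioo a b, HasDerivAt W 0 x := by
    intro x hx
    have h1 := (hu x hx).1.mul (hv x hx).2
    have h2 := (hv x hx).1.mul (hu x hx).2
    have h3 := h1.sub h2
    exact h3.congr_deriv (by ring : _ = (0:ℝ))
  have hWconst : ∀ x ∈ Ioo a b, W x = W ((a + b) / 2) := by
    have key : ∀ x ∈ Ioo a b, ∀ y ∈ Ioo a b, x ≤ y → W y = W x := by
      intro x hx y hy hxy
      have hsub : Icc x y ⊆ Ioo a b := Icc_subset_Ioo hx.1 hy.2
      have hcont : ContinuousOn W (Icc x y) := fun t ht =>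
        ((hW' t (hsub ht)).continuousAt).continuousWithinAt
      have := constant_of_has_deriv_right_zero hcont
        (fun t ht => (hW' t (hsub (Ico_subset_Icc_self ht))).hasDerivWithinAt)
      exact this y (right_mem_Icc.2 hxy)
    intro x hx
    have hx₀ : (a + b) / 2 ∈ Ioo a b := ⟨by linarith, by linarith⟩
    rcases le_total x ((a + b) / 2) with h | h
    · exact (key x hx _ hx₀ h).symm
    · exact key _ hx₀ x hx h
  have hWsin : ∀ x ∈ Ioo a b, W x = ρu x * ρv x * Real.sin (θu x - θv x) := by
    intro x hx
    obtain ⟨hρu, hu1, hu2⟩ := hpru x hx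
    obtain ⟨hρv, hv1, hv2⟩ := hprv x hx
    simp only [hWdef]
    rw [hu1, hv2, hv1, hu2, Real.sin_sub]
    ring
  set x₀ : ℝ := (a + b) / 2 with hx₀def
  have hx₀ : x₀ ∈ Ioo a b := ⟨by simp only [hx₀def]; linarith, by simp only [hx₀def]; linarith⟩
  set f : ℝ → ℝ := fun x => θu x - θv x with hfdef
  have hfc : ContinuousOn f (Ioo a b) := hθu.sub hθv
  have hivt : ∀ x ∈ Ioo a b, ∀ t ∈ uIcc (f x) (f x₀), ∃ y ∈ Ioo a b, f y = t := by
    intro x hx t ht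
    have hsub : uIcc x x₀ ⊆ Ioo a b := (Set.ordConnected_Ioo).uIcc_subset hx hx₀
    obtain ⟨y, hy, hyt⟩ := intermediate_value_uIcc (hfc.mono hsub) ht
    exact ⟨y, hsub hy, hyt⟩
  by_cases hc : W x₀ = 0
  · -- zero Wronskian : f takes values in π ℤ and is constant
    have hsin0 : ∀ x ∈ Ioo a b, Real.sin (f x) = 0 := by
      intro x hx
      have h2 := hWsin x hx
      have hρu := (hpru x hx).1
      have hρv := (hprv x hx).1
      have h0 : ρu x * ρv x * Real.sin (f x) = 0 := by
        rw [← h2, hWconst x hx, hc]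
      have hne : ρu x * ρv x ≠ 0 := by positivity
      exact (mul_eq_zero.1 h0).resolve_left hne
    obtain ⟨n₀, hn₀⟩ := Real.sin_eq_zero_iff.1 (hsin0 x₀ hx₀)
    have hcosne : Real.cos ((n₀ : ℝ) * π) ≠ 0 := by
      intro h
      have h1 := Real.sin_sq_add_cos_sq ((n₀ : ℝ) * π)
      rw [h, Real.sin_int_mul_pi] at h1
      norm_num at h1
    refine ⟨n₀, fun x hx => ?_⟩
    obtain ⟨n, hn⟩ := Real.sin_eq_zero_iff.1 (hsin0 x hx)
    have hpi := Real.pi_pos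
    have hnn : n = n₀ := by
      by_contra hne
      rcases lt_or_gt_of_ne hne with hlt | hgt
      · have hcast : (n : ℝ) ≤ (n₀ : ℝ) - 1 := by
          have : (n : ℝ) + 1 ≤ n₀ := by exact_mod_cast hlt
          linarith
        have ht : (n₀ : ℝ) * π - π / 2 ∈ uIcc (f x) (f x₀) := by
          rw [Set.mem_uIcc]
          left
          constructor
          · rw [← hn]
            nlinarith [mul_le_mul_of_nonneg_right hcast hpi.le]
          · rw [← hn₀]; linarith
        obtain ⟨y, hy, hyt⟩ := hivt x hx _ ht
        have h0 := hsin0 y hy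
        rw [hyt, Real.sin_sub, Real.sin_int_mul_pi, Real.sin_pi_div_two, Real.cos_pi_div_two] at h0
        simp only [zero_mul, mul_one, zero_sub, neg_eq_zero] at h0
        exact hcosne h0
      · have hcast : (n₀ : ℝ) + 1 ≤ (n : ℝ) := by exact_mod_cast hgt
        have ht : (n₀ : ℝ) * π + π / 2 ∈ uIcc (f x) (f x₀) := by
          rw [Set.mem_uIcc]
          right
          constructor
          · rw [← hn₀]; linarith
          · rw [← hn]
            nlinarith [mul_le_mul_of_nonneg_right hcast hpi.le]
        obtain ⟨y, hy, hyt⟩ := hivt x hx _ ht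
        have h0 := hsin0 y hy
        rw [hyt, Real.sin_add, Real.sin_int_mul_pi, Real.sin_pi_div_two, Real.cos_pi_div_two] at h0
        simp only [zero_mul, mul_one, zero_add] at h0
        exact hcosne h0
    constructor
    · show (n₀ : ℝ) * π ≤ f x
      rw [← hn, hnn]
    · show f x ≤ ((n₀ : ℝ) + 1) * π
      rw [← hn, hnn]
      nlinarith
  · -- nonzero Wronskian : sin (f x) never vanishes
    have hsinne : ∀ x ∈ Ioo a b, Real.sin (f x) ≠ 0 := by
      intro x hx h0
      have h2 := hWsin x hx
      rw [h0, mul_zero] at h2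
      rw [hWconst x hx] at h2
      exact hc h2
    have hpi := Real.pi_pos
    refine ⟨⌊f x₀ / π⌋, fun x hx => ?_⟩
    set k : ℤ := ⌊f x₀ / π⌋ with hkdef
    have hk1 : (k : ℝ) * π ≤ f x₀ := by
      have := Int.floor_le (f x₀ / π)
      rw [le_div_iff₀ hpi] at this
      rw [← hkdef] at this
      linarith
    have hk2 : f x₀ < ((k : ℝ) + 1) * π := by
      have := Int.lt_floor_add_one (f x₀ / π)
      rw [div_lt_iff₀ hpi] at this
      rw [← hkdef] at this
      linarith
    have hk1' : (k : ℝ) * π < f x₀ := by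
      rcases lt_or_eq_of_le hk1 with h | h
      · exact h
      · exact absurd (by rw [← h]; exact Real.sin_int_mul_pi k) (hsinne x₀ hx₀)
    constructor
    · show (k : ℝ) * π ≤ f x
      by_contra h
      push_neg at h
      have ht : (k : ℝ) * π ∈ uIcc (f x) (f x₀) := by
        rw [Set.mem_uIcc]; left; exact ⟨h.le, hk1⟩
      obtain ⟨y, hy, hyt⟩ := hivt x hx _ ht
      exact hsinne y hy (by rw [hyt]; exact Real.sin_int_mul_pi k)
    · show f x ≤ ((k : ℝ) + 1) * π
      by_contra h
      push_neg at h
      have ht : ((k : ℝ) + 1) * π ∈ uIcc (f x) (f x₀) := by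
        rw [Set.mem_uIcc]; right; exact ⟨hk2.le, h.le⟩
      obtain ⟨y, hy, hyt⟩ := hivt x hx _ ht
      refine hsinne y hy ?_
      rw [hyt]
      have : ((k : ℝ) + 1) * π = ((k + 1 : ℤ) : ℝ) * π := by push_cast; ring
      rw [this]
      exact Real.sin_int_mul_pi (k + 1)

lemma count_pointwise (θu0 θu1 θv0 θv1 : ℝ → ℝ) (k0 k1 : ℤ) (c d : ℝ)
    (h0c : θu0 c - θv0 c ∈ Icc ((k0 : ℝ) * π) (((k0 : ℝ) + 1) * π))
    (h0d : θu0 d - θv0 d ∈ Icc ((k0 : ℝ) * π) (((k0 : ℝ) + 1) * π))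
    (h1c : θu1 c - θv1 c ∈ Icc ((k1 : ℝ) * π) (((k1 : ℝ) + 1) * π))
    (h1d : θu1 d - θv1 d ∈ Icc ((k1 : ℝ) * π) (((k1 : ℝ) + 1) * π)) :
    |relOscCount θu0 θu1 c d - relOscCount θv0 θv1 c d| ≤ 2 := by
  have hpi := Real.pi_pos
  -- generic step : from the two Icc bounds get ceil/floor comparisons
  have key : ∀ X Y : ℝ, X ≤ Y + ((k1 - k0 + 1 : ℤ) : ℝ) * π →
      Y + ((k1 - k0 - 1 : ℤ) : ℝ) * π ≤ X →
      (⌈X / π⌉ ≤ ⌈Y / π⌉ + (k1 - k0 + 1) ∧ ⌈Y / π⌉ + (k1 - k0 - 1) ≤ ⌈X / π⌉) ∧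
      (⌊X / π⌋ ≤ ⌊Y / π⌋ + (k1 - k0 + 1) ∧ ⌊Y / π⌋ + (k1 - k0 - 1) ≤ ⌊X / π⌋) := by
    intro X Y h1 h2
    have e1 : Y / π + ((k1 - k0 + 1 : ℤ) : ℝ) = (Y + ((k1 - k0 + 1 : ℤ) : ℝ) * π) / π := by
      field_simp
    have e2 : Y / π + ((k1 - k0 - 1 : ℤ) : ℝ) = (Y + ((k1 - k0 - 1 : ℤ) : ℝ) * π) / π := by
      field_simp
    have d1 : X / π ≤ Y / π + ((k1 - k0 + 1 : ℤ) : ℝ) := by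
      rw [e1]; gcongr
    have d2 : Y / π + ((k1 - k0 - 1 : ℤ) : ℝ) ≤ X / π := by
      rw [e2]; gcongr
    refine ⟨⟨?_, ?_⟩, ?_, ?_⟩
    · calc ⌈X / π⌉ ≤ ⌈Y / π + ((k1 - k0 + 1 : ℤ) : ℝ)⌉ := Int.ceil_le_ceil d1
        _ = ⌈Y / π⌉ + (k1 - k0 + 1) := Int.ceil_add_intCast _ _
    · calc ⌈Y / π⌉ + (k1 - k0 - 1) = ⌈Y / π + ((k1 - k0 - 1 : ℤ) : ℝ)⌉ := (Int.ceil_add_intCast _ _).symm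
        _ ≤ ⌈X / π⌉ := Int.ceil_le_ceil d2
    · calc ⌊X / π⌋ ≤ ⌊Y / π + ((k1 - k0 + 1 : ℤ) : ℝ)⌋ := Int.floor_le_floor d1
        _ = ⌊Y / π⌋ + (k1 - k0 + 1) := Int.floor_add_intCast _ _
    · calc ⌊Y / π⌋ + (k1 - k0 - 1) = ⌊Y / π + ((k1 - k0 - 1 : ℤ) : ℝ)⌋ := (Int.floor_add_intCast _ _).symm
        _ ≤ ⌊X / π⌋ := Int.floor_le_floor d2
  have hd := key (θu1 d - θu0 d) (θv1 d - θv0 d)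
    (by have A := h1d.2; have B := h0d.1; push_cast; nlinarith)
    (by have A := h1d.1; have B := h0d.2; push_cast; nlinarith)
  have hc := key (θu1 c - θu0 c) (θv1 c - θv0 c)
    (by have A := h1c.2; have B := h0c.1; push_cast; nlinarith)
    (by have A := h1c.1; have B := h0c.2; push_cast; nlinarith)
  obtain ⟨⟨cd1, cd2⟩, -⟩ := hd
  obtain ⟨-, fd1, fd2⟩ := hc
  unfold relOscCount
  rw [abs_le]
  have cd1' : ((⌈(θu1 d - θu0 d) / π⌉ : ℤ) : ℝ) ≤ ((⌈(θv1 d - θv0 d) / π⌉ : ℤ) : ℝ) + ((k1 : ℝ) - (k0 : ℝ) + 1) := by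
    exact_mod_cast cd1
  have cd2' : ((⌈(θv1 d - θv0 d) / π⌉ : ℤ) : ℝ) + ((k1 : ℝ) - (k0 : ℝ) - 1) ≤ ((⌈(θu1 d - θu0 d) / π⌉ : ℤ) : ℝ) := by
    exact_mod_cast cd2
  have fd1' : ((⌊(θu1 c - θu0 c) / π⌋ : ℤ) : ℝ) ≤ ((⌊(θv1 c - θv0 c) / π⌋ : ℤ) : ℝ) + ((k1 : ℝ) - (k0 : ℝ) + 1) := by
    exact_mod_cast fd1
  have fd2' : ((⌊(θv1 c - θv0 c) / π⌋ : ℤ) : ℝ) + ((k1 : ℝ) - (k0 : ℝ) - 1) ≤ ((⌊(θu1 c - θu0 c) / π⌋ : ℤ) : ℝ) := by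
    exact_mod_cast fd2
  constructor <;> linarith

/-- Independence of the relative oscillation counts from the chosen solutions:
for nontrivial solutions `τⱼ uⱼ = 0`, `τⱼ vⱼ = 0` with Prüfer angles `θuⱼ`, `θvⱼ`,
the liminf (and limsup) of the weighted sign flip counts for the pairs `(u₀,u₁)`
and `(v₀,v₁)` differ by at most `4`. -/
theorem relOsc_count_solution_independent
    (a b : ℝ) (hab : a < b) (p q0 q1 : ℝ → ℝ)
    (u0 u0' u1 u1' v0 v0' v1 v1' : ℝ → ℝ)
    (ρu0 θu0 ρu1 θu1 ρv0 θv0 ρv1 θv1 : ℝ → ℝ)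
    (hp : ∀ x ∈ Ioo a b, 0 < p x)
    (hu0 : ∀ x ∈ Ioo a b, HasDerivAt u0 (u0' x) x ∧
      HasDerivAt (fun y => p y * u0' y) (q0 x * u0 x) x)
    (hu1 : ∀ x ∈ Ioo a b, HasDerivAt u1 (u1' x) x ∧
      HasDerivAt (fun y => p y * u1' y) (q1 x * u1 x) x)
    (hv0 : ∀ x ∈ Ioo a b, HasDerivAt v0 (v0' x) x ∧
      HasDerivAt (fun y => p y * v0' y) (q0 x * v0 x) x)
    (hv1 : ∀ x ∈ Ioo a b, HasDerivAt v1 (v1' x) x ∧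
      HasDerivAt (fun y => p y * v1' y) (q1 x * v1 x) x)
    (hpru0 : ContinuousOn θu0 (Ioo a b) ∧ ∀ x ∈ Ioo a b, 0 < ρu0 x ∧
      u0 x = ρu0 x * sin (θu0 x) ∧ p x * u0' x = ρu0 x * cos (θu0 x))
    (hpru1 : ContinuousOn θu1 (Ioo a b) ∧ ∀ x ∈ Ioo a b, 0 < ρu1 x ∧
      u1 x = ρu1 x * sin (θu1 x) ∧ p x * u1' x = ρu1 x * cos (θu1 x))
    (hprv0 : ContinuousOn θv0 (Ioo a b) ∧ ∀ x ∈ Ioo a b, 0 < ρv0 x ∧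
      v0 x = ρv0 x * sin (θv0 x) ∧ p x * v0' x = ρv0 x * cos (θv0 x))
    (hprv1 : ContinuousOn θv1 (Ioo a b) ∧ ∀ x ∈ Ioo a b, 0 < ρv1 x ∧
      v1 x = ρv1 x * sin (θv1 x) ∧ p x * v1' x = ρv1 x * cos (θv1 x)) :
    |Filter.liminf (fun cd : ℝ × ℝ => relOscCount θu0 θu1 cd.1 cd.2) (exhaustFilter a b) -
      Filter.liminf (fun cd : ℝ × ℝ => relOscCount θv0 θv1 cd.1 cd.2) (exhaustFilter a b)| ≤ 4 ∧
    |Filter.limsup (fun cd : ℝ × ℝ => relOscCount θu0 θu1 cd.1 cd.2) (exhaustFilter a b) -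
      Filter.limsup (fun cd : ℝ × ℝ => relOscCount θv0 θv1 cd.1 cd.2) (exhaustFilter a b)| ≤ 4 := by
  obtain ⟨k0, hk0⟩ := angle_confined a b hab p q0 u0 u0' v0 v0' ρu0 θu0 ρv0 θv0 hu0 hv0
    hpru0.1 hprv0.1 hpru0.2 hprv0.2
  obtain ⟨k1, hk1⟩ := angle_confined a b hab p q1 u1 u1' v1 v1' ρu1 θu1 ρv1 θv1 hu1 hv1
    hpru1.1 hprv1.1 hpru1.2 hprv1.2
  have hev : ∀ᶠ cd : ℝ × ℝ in exhaustFilter a b,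
      |relOscCount θu0 θu1 cd.1 cd.2 - relOscCount θv0 θv1 cd.1 cd.2| ≤ 4 := by
    have h1 : Ioo a b ∈ nhdsWithin a (Ioi a) := Ioo_mem_nhdsGT_of_mem ⟨le_rfl, hab⟩
    have h2 : Ioo a b ∈ nhdsWithin b (Iio b) := Ioo_mem_nhdsLT_of_mem ⟨hab, le_rfl⟩
    have hmem : (Ioo a b) ×ˢ (Ioo a b) ∈ exhaustFilter a b := Filter.prod_mem_prod h1 h2
    refine Filter.mem_of_superset hmem ?_
    rintro ⟨c, d⟩ ⟨hc, hd⟩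
    have h := count_pointwise θu0 θu1 θv0 θv1 k0 k1 c d (hk0 c hc) (hk0 d hd) (hk1 c hc) (hk1 d hd)
    simp only [Set.mem_setOf_eq]
    have := abs_le.1 h
    rw [abs_le]
    constructor <;> linarith [this.1, this.2]
  exact ⟨myLiminf_close (by norm_num) hev, myLimsup_close (by norm_num) hev⟩
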